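/- Let r, ε, u0 be real numbers with 0 ≤ r < 1, ε ≥ 0, u0 ≥ 0, and set θ = r·ε·u0/(1−r)². Assume θ ≤ 1/4. Define U = (u0/(1−r))·(1 + 4θ/(1+√(1−4θ))²). Then U satisfies the fixed-point equation U = u0 + r·(1 + ε·U)·U. -/

import Mathlib

theorem stmt_5 (r ε u0 θ U : ℝ)
    (hr0 : 0 ≤ r) (hr1 : r < 1) (hε : 0 ≤ ε) (hu0 : 0 ≤ u0)
    (hθdef : θ = r * ε * u0 / (1 - r) ^ 2) (hθ : θ ≤ 1 / 4)
    (hU : U = (u0 / (1 - r)) * (1 + 4 * θ / (1 + Real.sqrt (1 - 4 * θ)) ^ 2)) :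
    U = u0 + r * (1 + ε * U) * U := by
  set s := Real.sqrt (1 - 4 * θ) with hs
  have hr : (0:ℝ) < 1 - r := by linarith
  have hs0 : 0 ≤ s := Real.sqrt_nonneg _
  have hs2 : s ^ 2 = 1 - 4 * θ := Real.sq_sqrt (by linarith)
  have hsp : (0:ℝ) < 1 + s := by linarith
  have hθr : θ * (1 - r) ^ 2 = r * ε * u0 := by
    field_simp at hθdef; linarith
  have hA : U * (1 - r) * (1 + s) = 2 * u0 := by
    rw [hU]; field_simp; linear_combination u0*hs2
  have key : (U - (u0 + r * (1 + ε * U) * U)) * ((1 - r) ^ 2 * (1 + s) ^ 2) = 0 := by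
    linear_combination ((1-r)^2*(1+s) - r*ε*(U*(1-r)*(1+s)+2*u0))*hA + 4*u0*hθr - u0*(1-r)^2*hs2
  have hne : (1 - r) ^ 2 * (1 + s) ^ 2 ≠ 0 := by positivity
  have := mul_eq_zero.mp key
  rcases this with h | h
  · linarith
  · exact absurd h hne
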